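/- In the setup below, let T be a bounded operator on ℓ²(Z) of finite propagation. Then T̂ is a compactly supported continuous function from G to C^{ru}_b(G): (i) for each y ∈ G, the function x ↦ T̂_y(x) is bounded, continuous, and right uniformly continuous on G; (ii) the map y ↦ T̂_y is continuous from G to C^{ru}_b(G) with the sup norm; (iii) the set {y ∈ G : T̂_y ≠ 0} is contained in a compact subset of G. -/

import Mathlib

open MeasureTheory Metric Bornology Filter Topology
open scoped ENNReal BoundedContinuousFunction Pointwise

noncomputable section

/-- `ℓ²(X)` over `ℂ`. -/
abbrev l2 (X : Type*) : Type _ := lp (fun _ : X => ℂ) 2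

/-- The standard basis vector `δ_x` of `ℓ²(X)`. -/
def delta {X : Type*} (x : X) : l2 X := by classical exact lp.single 2 x 1

/-- The matrix entry `a_{x,y} = ⟨a δ_y, δ_x⟩` of a bounded operator on `ℓ²(X)`. -/
def entry {X : Type*} (a : l2 X →L[ℂ] l2 X) (x y : X) : ℂ := inner ℂ (delta x) (a (delta y))

/-- `d` is a proper left-invariant metric on the topological group `G` that induces
(is compatible with) its topology. -/
structure IsProperLeftInvariantCompatibleMetric (G : Type*) [Group G] [TopologicalSpace G]
    (d : G → G → ℝ) : Prop where
  refl : ∀ x, d x x = 0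
  eq_of : ∀ {x y}, d x y = 0 → x = y
  symm : ∀ x y, d x y = d y x
  triangle : ∀ x y z, d x z ≤ d x y + d y z
  left_invariant : ∀ g x y, d (g * x) (g * y) = d x y
  compatible : ∀ s : Set G, IsOpen s ↔ ∀ x ∈ s, ∃ ε > 0, ∀ y, d x y < ε → y ∈ s
  proper : ∀ (x : G) (r : ℝ), IsCompact {y : G | d x y ≤ r}

/-- The kernel `T̂` associated to a finite propagation operator `T` on `ℓ²(Z)`:
`T̂_y(x) = ∑_{z,w ∈ Z} φ_z(x) φ_w(xy) T_{z,w} Δ(y)^{-1/2}`, where `φ_z(g) = φ(z⁻¹g)`. -/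
def hatT {G : Type*} [Group G] (Δ : G → ℝ) (φ : G → ℝ) (Z : Set G)
    (T : l2 Z →L[ℂ] l2 Z) (y x : G) : ℂ :=
  ∑' (z : Z) (w : Z),
    ((φ ((z : G)⁻¹ * x) : ℝ) : ℂ) * ((φ ((w : G)⁻¹ * (x * y)) : ℝ) : ℂ) * entry T z w *
      (((Δ y ^ (-(1/2) : ℝ) : ℝ)) : ℂ)

set_option maxHeartbeats 2000000 in
/-- For `T` of finite propagation, `T̂` is a compactly supported
continuous function from `G` to `C^{ru}_b(G)`. -/
theorem hatT_compactly_supported_continuous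
    (G : Type*) [Group G] [TopologicalSpace G] [IsTopologicalGroup G]
    [LocallyCompactSpace G] [SecondCountableTopology G] [T2Space G]
    [MeasurableSpace G] [BorelSpace G]
    (μ : Measure G) [μ.IsHaarMeasure]
    (Δ : G → ℝ) (hΔpos : ∀ y : G, 0 < Δ y)
    (hΔ : ∀ y : G, Measure.map (fun x => x * y) μ = ENNReal.ofReal (Δ y)⁻¹ • μ)
    (d : G → G → ℝ) (hd : IsProperLeftInvariantCompatibleMetric G d)
    (Z : Set G)
    (hZulf : ∀ S > (0:ℝ), ∃ N : ℕ, ∀ z ∈ Z,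
      {x ∈ Z | d z x ≤ S}.Finite ∧ {x ∈ Z | d z x ≤ S}.ncard ≤ N)
    (δ : ℝ) (hδpos : 0 < δ)
    (hsep : ∀ z ∈ Z, ∀ w ∈ Z, z ≠ w → δ ≤ d z w)
    (hlat : ∃ R > (0:ℝ), ∀ x : G, ∃ z ∈ Z, d z x ≤ R)
    (φ : G → ℝ) (hφcont : Continuous φ) (hφnn : ∀ g : G, 0 ≤ φ g)
    (hφsupp : ∀ g : G, δ / 4 < d 1 g → φ g = 0)
    (hφnorm : ∫ g, φ g ^ 2 ∂μ = 1)
    (T : l2 Z →L[ℂ] l2 Z) (P : ℝ) (hP : 0 ≤ P)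
    (hT : ∀ z w : Z, P < d z w → entry T z w = 0) :
    (∀ y : G,
      (∃ C : ℝ, ∀ x : G, ‖hatT Δ φ Z T y x‖ ≤ C) ∧
      Continuous (fun x : G => hatT Δ φ Z T y x) ∧
      (∀ ε > (0:ℝ), ∃ V ∈ nhds (1 : G), ∀ g ∈ V, ∀ x : G,
        ‖hatT Δ φ Z T y (x * g) - hatT Δ φ Z T y x‖ < ε)) ∧
    (∀ y₀ : G, ∀ ε > (0:ℝ), ∃ V ∈ nhds y₀, ∀ y ∈ V, ∀ x : G,
      ‖hatT Δ φ Z T y x - hatT Δ φ Z T y₀ x‖ ≤ ε) ∧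
    (∃ Kc : Set G, IsCompact Kc ∧ ∀ y ∉ Kc, ∀ x : G, hatT Δ φ Z T y x = 0) := by
  classical
  -- ## Basic metric facts
  have dnonneg : ∀ a b : G, 0 ≤ d a b := by
    intro a b
    have h1 := hd.triangle a b a
    have h2 := hd.symm b a
    have h3 := hd.refl a
    linarith
  have dinv : ∀ z x : G, d 1 (z⁻¹ * x) = d z x := by
    intro z x
    have := hd.left_invariant z 1 (z⁻¹ * x)
    simpa using this.symm
  have ball_open : ∀ (c : G) (r : ℝ), IsOpen {g : G | d c g < r} := by
    intro c r
    rw [hd.compatible]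
    intro x hx
    refine ⟨r - d c x, by simp only [Set.mem_setOf_eq] at hx; linarith, fun y hy => ?_⟩
    have := hd.triangle c x y
    simp only [Set.mem_setOf_eq] at *
    linarith
  have hδ4 : 0 < δ / 4 := by linarith
  -- support of φ
  have hsupp' : ∀ u : G, φ u ≠ 0 → d 1 u ≤ δ / 4 := by
    intro u h
    by_contra hc
    exact h (hφsupp u (not_le.mp hc))
  -- Z is nonempty
  obtain ⟨R, hRpos, hRlat⟩ := hlat
  have hZne : Nonempty Z := by
    obtain ⟨z₁, hz₁, -⟩ := hRlat 1
    exact ⟨⟨z₁, hz₁⟩⟩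
  -- ## bound for φ
  have hKcomp : IsCompact {g : G | d 1 g ≤ δ / 4} := hd.proper 1 (δ / 4)
  obtain ⟨gm, hgm, hmax⟩ := hKcomp.exists_isMaxOn ⟨1, by simp [hd.refl]; linarith⟩
    hφcont.continuousOn
  set Mφ : ℝ := max (φ gm) 0 with hMφdef
  have hMφ0 : 0 ≤ Mφ := le_max_right _ _
  have hMφ : ∀ u : G, φ u ≤ Mφ := by
    intro u
    by_cases hu : d 1 u ≤ δ / 4
    · exact le_trans (hmax hu) (le_max_left _ _)
    · rw [hφsupp u (not_le.mp hu)]; exact hMφ0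
  have hMφabs : ∀ u : G, |φ u| ≤ Mφ := fun u => by
    rw [abs_of_nonneg (hφnn u)]; exact hMφ u
  -- ## entry bound
  have norm_delta : ∀ x : Z, ‖delta x‖ = 1 := by
    intro x
    rw [delta]
    have h := lp.norm_single (E := fun _ : Z => ℂ) (p := 2) (by norm_num) x (1 : ℂ)
    simp only [norm_one] at h
    convert h using 3
  have hEntry : ∀ z w : Z, ‖entry T z w‖ ≤ ‖T‖ := by
    intro z w
    rw [entry]
    calc ‖(inner ℂ (delta z) (T (delta w)) : ℂ)‖ ≤ ‖delta z‖ * ‖T (delta w)‖ :=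
          norm_inner_le_norm _ _
      _ ≤ 1 * (‖T‖ * ‖delta w‖) := by
          rw [norm_delta z, one_mul, one_mul]
          exact T.le_opNorm _
      _ = ‖T‖ := by rw [norm_delta w]; ring
  -- ## tsum computation lemmas
  have double : ∀ (f : Z → Z → ℂ) (z₀ w₀ : Z), (∀ z w, z ≠ z₀ → f z w = 0) →
      (∀ z w, w ≠ w₀ → f z w = 0) → (∑' z, ∑' w, f z w) = f z₀ w₀ := by
    intro f z₀ w₀ h1 h2
    have h3 : ∀ z, (∑' w, f z w) = f z w₀ := fun z => tsum_eq_single w₀ (fun w hw => h2 z w hw)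
    rw [tsum_congr h3]
    exact tsum_eq_single z₀ (fun z hz => h1 z w₀ hz)
  have double_sum : ∀ (f : Z → Z → ℂ) (s t : Finset Z), (∀ z, z ∉ s → ∀ w, f z w = 0) →
      (∀ w, w ∉ t → ∀ z, f z w = 0) → (∑' z, ∑' w, f z w) = ∑ z ∈ s, ∑ w ∈ t, f z w := by
    intro f s t h1 h2
    have h3 : ∀ z, (∑' w, f z w) = ∑ w ∈ t, f z w := fun z =>
      tsum_eq_sum (fun w hw => h2 w hw z)
    rw [tsum_congr h3]
    exact tsum_eq_sum (fun z hz => Finset.sum_eq_zero fun w _ => h1 z hz w)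
  -- ## the unique dominant lattice point
  have dominant : ∀ (a g : G), d 1 g < δ / 4 → ∃ z₀ : Z, ∀ z : Z, z ≠ z₀ →
      φ ((z : G)⁻¹ * a) = 0 ∧ φ ((z : G)⁻¹ * (a * g)) = 0 := by
    intro a g hg
    have near : ∀ z : Z, (φ ((z : G)⁻¹ * a) ≠ 0 ∨ φ ((z : G)⁻¹ * (a * g)) ≠ 0) →
        d (z : G) a < δ / 2 := by
      intro z hz
      rcases hz with h | h
      · have := hsupp' _ h
        rw [dinv] at this
        linarith
      · have h1 := hsupp' _ h
        rw [dinv] at h1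
        have h2 := hd.triangle (z : G) (a * g) a
        have h3 : d (a * g) a = d 1 g := by
          have := hd.left_invariant a g 1
          simp only [mul_one] at this
          rw [this]
          exact hd.symm g 1
        linarith
    by_cases hex : ∃ z : Z, φ ((z : G)⁻¹ * a) ≠ 0 ∨ φ ((z : G)⁻¹ * (a * g)) ≠ 0
    · obtain ⟨z₀, hz₀⟩ := hex
      refine ⟨z₀, fun z hz => ?_⟩
      constructor <;> by_contra hc
      all_goals {
        have h1 := near z (by tauto)
        have h2 := near z₀ hz₀
        have h3 := hd.triangle (z : G) a (z₀ : G)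
        have h4 := hd.symm (z₀ : G) a
        have h5 := hsep z z.2 z₀ z₀.2 (fun h => hz (Subtype.coe_injective h))
        linarith }
    · push_neg at hex
      obtain ⟨z₁⟩ := hZne
      exact ⟨z₁, fun z _ => hex z⟩
  -- ## formula for hatT
  set c : G → ℝ := fun y => Δ y ^ (-(1/2) : ℝ) with hcdef
  have hc_pos : ∀ y, 0 < c y := fun y => Real.rpow_pos_of_pos (hΔpos y) _
  have formula : ∀ (y x : G) (z₀ w₀ : Z), (∀ z : Z, z ≠ z₀ → φ ((z : G)⁻¹ * x) = 0) →
      (∀ w : Z, w ≠ w₀ → φ ((w : G)⁻¹ * (x * y)) = 0) →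
      hatT Δ φ Z T y x = ((φ ((z₀ : G)⁻¹ * x) : ℝ) : ℂ) * ((φ ((w₀ : G)⁻¹ * (x * y)) : ℝ) : ℂ)
        * entry T z₀ w₀ * ((c y : ℝ) : ℂ) := by
    intro y x z₀ w₀ h1 h2
    unfold hatT
    exact double _ z₀ w₀ (fun z w hz => by rw [h1 z hz]; push_cast; ring)
      (fun z w hw => by rw [h2 w hw]; push_cast; ring)
  -- ## locally finitely many lattice points
  have finite_near : ∀ (c₀ : G) (r : ℝ), {z : Z | d (z : G) c₀ ≤ r}.Finite := by
    intro c₀ r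
    obtain ⟨z₁, hz₁Z, hz₁⟩ := hRlat c₀
    set S : ℝ := max (r + R) 1 with hSdef
    obtain ⟨N, hN⟩ := hZulf S (lt_of_lt_of_le one_pos (le_max_right _ _))
    have hsub : {z : Z | d (z : G) c₀ ≤ r} ⊆ (Subtype.val) ⁻¹' {x | x ∈ Z ∧ d z₁ x ≤ S} := by
      intro z hz
      simp only [Set.mem_setOf_eq] at hz
      refine ⟨z.2, ?_⟩
      have h1 := hd.triangle z₁ c₀ (z : G)
      have h2 := hd.symm c₀ (z : G)
      have h3 : r + R ≤ S := le_max_left _ _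
      linarith
    exact (((hN z₁ hz₁Z).1).preimage (Subtype.val_injective.injOn)).subset hsub
  -- ## right uniform continuity of φ
  have rucφ : ∀ ε > (0 : ℝ), ∃ V ∈ 𝓝 (1 : G), ∀ g ∈ V, ∀ u : G, |φ (u * g) - φ u| < ε := by
    intro ε hε
    set K : Set G := {g : G | d 1 g ≤ δ / 4} with hKdef
    set Wo : Set G := {g : G | d 1 g < δ / 4} with hWodef
    have hWo_open : IsOpen Wo := ball_open 1 _
    have hWo_mem : Wo ∈ 𝓝 (1 : G) := by
      apply hWo_open.mem_nhds
      simp only [hWodef, Set.mem_setOf_eq, hd.refl]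
      linarith
    have hWoK : Wo ⊆ K := by
      intro g hg
      simp only [hWodef, Set.mem_setOf_eq] at hg
      exact le_of_lt hg
    set L : Set G := K ∪ K * K⁻¹ with hLdef
    have hLc : IsCompact L := hKcomp.union (hKcomp.mul hKcomp.inv)
    have key : ∀ u : G, ∃ O : Set G, IsOpen O ∧ (1 : G) ∈ O ∧
        ∀ v ∈ O * O, |φ (u * v) - φ u| < ε / 2 := by
      intro u
      have hcont : Tendsto (fun v => φ (u * v)) (𝓝 1) (𝓝 (φ u)) := by
        have := (hφcont.comp (continuous_mul_left u)).continuousAt (x := (1 : G))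
        simpa [ContinuousAt, Function.comp_def] using this
      have hs : {v : G | |φ (u * v) - φ u| < ε / 2} ∈ 𝓝 (1 : G) := by
        have := Metric.tendsto_nhds.mp hcont (ε / 2) (by linarith)
        exact (by simpa [Real.dist_eq] using this : ∀ᶠ v in 𝓝 (1 : G), |φ (u * v) - φ u| < ε / 2)
      obtain ⟨O, hO_open, hO_mem, hO_sub⟩ := exists_open_nhds_one_mul_subset hs
      exact ⟨O, hO_open, hO_mem, fun v hv => hO_sub hv⟩
    choose O hOopen hOmem hOprop using key
    set U : G → Set G := fun u => (fun v => u⁻¹ * v) ⁻¹' O u with hUdef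
    obtain ⟨t, -, ht⟩ := hLc.elim_nhds_subcover U (fun u _ =>
      ((hOopen u).preimage (continuous_mul_left u⁻¹)).mem_nhds
        (by simp [hUdef, hOmem u]))
    refine ⟨Wo ∩ ⋂ u ∈ t, O u, Filter.inter_mem hWo_mem
      ((Filter.biInter_finset_mem t).mpr fun u _ => (hOopen u).mem_nhds (hOmem u)), ?_⟩
    intro g hg u
    obtain ⟨hgWo, hgO⟩ := hg
    simp only [Set.mem_iInter] at hgO
    by_cases huL : u ∈ L
    · have := ht huL
      simp only [Set.mem_iUnion] at this
      obtain ⟨i, hit, hui⟩ := this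
      have hvO : i⁻¹ * u ∈ O i := hui
      have h1 : |φ (u * g) - φ i| < ε / 2 := by
        have hmem : (i⁻¹ * u) * g ∈ O i * O i := Set.mul_mem_mul hvO (hgO i hit)
        have := hOprop i _ hmem
        have heq : i * ((i⁻¹ * u) * g) = u * g := by group
        rwa [heq] at this
      have h2 : |φ u - φ i| < ε / 2 := by
        have hmem : (i⁻¹ * u) * 1 ∈ O i * O i := Set.mul_mem_mul hvO (hOmem i)
        have := hOprop i _ hmem
        have heq : i * ((i⁻¹ * u) * 1) = u := by group
        rwa [heq] at this
      calc |φ (u * g) - φ u| ≤ |φ (u * g) - φ i| + |φ i - φ u| := abs_sub_le _ _ _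
        _ < ε / 2 + ε / 2 := by rw [abs_sub_comm (φ i)]; exact add_lt_add h1 h2
        _ = ε := by ring
    · have h1 : φ u = 0 := by
        apply hφsupp
        by_contra hc
        exact huL (Or.inl (not_lt.mp hc))
      have h2 : φ (u * g) = 0 := by
        apply hφsupp
        by_contra hc
        push_neg at hc
        have huK : u * g ∈ K := hc
        have : u ∈ K * K⁻¹ := by
          have : u = (u * g) * g⁻¹ := by group
          rw [this]
          exact Set.mul_mem_mul huK (Set.inv_mem_inv.mpr (hWoK hgWo))
        exact huL (Or.inr this)
      rw [h1, h2]
      simpa using hε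
  -- ## norm estimates
  have tri : ∀ a b c' : ℂ, ‖a - c'‖ ≤ ‖a - b‖ + ‖b - c'‖ := fun a b c' => by
    simpa [dist_eq_norm] using dist_triangle a b c'
  have BOUND : ∀ y x : G, ‖hatT Δ φ Z T y x‖ ≤ Mφ ^ 2 * ‖T‖ * c y := by
    intro y x
    have h1 : d (1 : G) 1 < δ / 4 := by rw [hd.refl]; linarith
    obtain ⟨z₀, hz₀⟩ := dominant x 1 h1
    obtain ⟨w₀, hw₀⟩ := dominant (x * y) 1 h1
    rw [formula y x z₀ w₀ (fun z hz => (hz₀ z hz).1) (fun w hw => (hw₀ w hw).1)]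
    rw [norm_mul, norm_mul, norm_mul, Complex.norm_real, Complex.norm_real,
      Complex.norm_real, Real.norm_eq_abs, Real.norm_eq_abs, Real.norm_eq_abs,
      abs_of_pos (hc_pos y)]
    have e1 := hMφabs ((z₀ : G)⁻¹ * x)
    have e2 := hMφabs ((w₀ : G)⁻¹ * (x * y))
    have e3 := hEntry z₀ w₀
    have e4 : (0:ℝ) ≤ c y := (hc_pos y).le
    have : |φ ((z₀ : G)⁻¹ * x)| * |φ ((w₀ : G)⁻¹ * (x * y))| * ‖entry T z₀ w₀‖
        ≤ Mφ * Mφ * ‖T‖ := by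
      apply mul_le_mul _ e3 (norm_nonneg _) (by positivity)
      exact mul_le_mul e1 e2 (abs_nonneg _) hMφ0
    calc |φ ((z₀ : G)⁻¹ * x)| * |φ ((w₀ : G)⁻¹ * (x * y))| * ‖entry T z₀ w₀‖ * c y
        ≤ Mφ * Mφ * ‖T‖ * c y := by
          exact mul_le_mul_of_nonneg_right this e4
      _ = Mφ ^ 2 * ‖T‖ * c y := by ring
  have DIFF : ∀ (y y' x g₁ g₂ : G) (ω₁ ω₂ : ℝ),
      d 1 g₁ < δ / 4 → d 1 g₂ < δ / 4 →
      (∀ u : G, |φ (u * g₁) - φ u| ≤ ω₁) → (∀ u : G, |φ (u * g₂) - φ u| ≤ ω₂) →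
      (x * g₁) * y' = (x * y) * g₂ →
      ‖hatT Δ φ Z T y' (x * g₁) - hatT Δ φ Z T y x‖ ≤
        Mφ ^ 2 * ‖T‖ * |c y' - c y| + (ω₁ + ω₂) * Mφ * ‖T‖ * c y := by
    intro y y' x g₁ g₂ ω₁ ω₂ hg₁ hg₂ hω₁ hω₂ hxy
    obtain ⟨z₀, hz₀⟩ := dominant x g₁ hg₁
    obtain ⟨w₀, hw₀⟩ := dominant (x * y) g₂ hg₂
    have e1 : hatT Δ φ Z T y x = ((φ ((z₀ : G)⁻¹ * x) : ℝ) : ℂ) *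
        ((φ ((w₀ : G)⁻¹ * (x * y)) : ℝ) : ℂ) * entry T z₀ w₀ * ((c y : ℝ) : ℂ) :=
      formula y x z₀ w₀ (fun z hz => (hz₀ z hz).1) (fun w hw => (hw₀ w hw).1)
    have e2 : hatT Δ φ Z T y' (x * g₁) = ((φ ((z₀ : G)⁻¹ * (x * g₁)) : ℝ) : ℂ) *
        ((φ ((w₀ : G)⁻¹ * ((x * g₁) * y')) : ℝ) : ℂ) * entry T z₀ w₀ * ((c y' : ℝ) : ℂ) :=
      formula y' (x * g₁) z₀ w₀ (fun z hz => (hz₀ z hz).2)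
        (fun w hw => by rw [hxy]; exact (hw₀ w hw).2)
    set α : ℝ := φ ((z₀ : G)⁻¹ * x) with hα
    set α' : ℝ := φ ((z₀ : G)⁻¹ * (x * g₁)) with hα'
    set β : ℝ := φ ((w₀ : G)⁻¹ * (x * y)) with hβ
    set β' : ℝ := φ ((w₀ : G)⁻¹ * ((x * g₁) * y')) with hβ'
    set E : ℂ := entry T z₀ w₀ with hE
    have hαd : |α' - α| ≤ ω₁ := by
      have := hω₁ ((z₀ : G)⁻¹ * x)
      rw [mul_assoc] at this
      simpa [hα, hα'] using this
    have hβd : |β' - β| ≤ ω₂ := by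
      have := hω₂ ((w₀ : G)⁻¹ * (x * y))
      rw [mul_assoc] at this
      simp only [hβ, hβ']
      rw [hxy]
      simpa using this
    have hαM : |α| ≤ Mφ := by rw [hα]; exact hMφabs _
    have hα'M : |α'| ≤ Mφ := by rw [hα']; exact hMφabs _
    have hβM : |β| ≤ Mφ := by rw [hβ]; exact hMφabs _
    have hβ'M : |β'| ≤ Mφ := by rw [hβ']; exact hMφabs _
    have hω₁0 : 0 ≤ ω₁ := le_trans (abs_nonneg _) hαd
    have hω₂0 : 0 ≤ ω₂ := le_trans (abs_nonneg _) hβd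
    rw [e1, e2]
    have step := tri ((α' : ℂ) * (β' : ℂ) * E * ((c y' : ℝ) : ℂ))
      ((α' : ℂ) * (β' : ℂ) * E * ((c y : ℝ) : ℂ))
      ((α : ℂ) * (β : ℂ) * E * ((c y : ℝ) : ℂ))
    refine le_trans step (add_le_add ?_ ?_)
    · have : (α' : ℂ) * (β' : ℂ) * E * ((c y' : ℝ) : ℂ) - (α' : ℂ) * (β' : ℂ) * E *
          ((c y : ℝ) : ℂ) = (α' : ℂ) * (β' : ℂ) * E * (((c y' - c y : ℝ)) : ℂ) := by
        push_cast; ring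
      rw [this, norm_mul, norm_mul, norm_mul, Complex.norm_real, Complex.norm_real,
        Complex.norm_real, Real.norm_eq_abs, Real.norm_eq_abs, Real.norm_eq_abs]
      have h1 : |α'| * |β'| * ‖E‖ ≤ Mφ ^ 2 * ‖T‖ := by
        calc |α'| * |β'| * ‖E‖ ≤ Mφ * Mφ * ‖T‖ :=
              mul_le_mul (mul_le_mul hα'M hβ'M (abs_nonneg _) hMφ0)
                (hEntry z₀ w₀) (norm_nonneg _) (by positivity)
          _ = Mφ ^ 2 * ‖T‖ := by ring
      exact mul_le_mul_of_nonneg_right h1 (abs_nonneg _)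
    · have : (α' : ℂ) * (β' : ℂ) * E * ((c y : ℝ) : ℂ) - (α : ℂ) * (β : ℂ) * E *
          ((c y : ℝ) : ℂ) = (((α' - α : ℝ) : ℂ) * (β' : ℂ) + (α : ℂ) * ((β' - β : ℝ) : ℂ))
          * E * ((c y : ℝ) : ℂ) := by
        push_cast; ring
      rw [this, norm_mul, norm_mul, Complex.norm_real, Real.norm_eq_abs,
        abs_of_pos (hc_pos y)]
      have h1 : ‖(((α' - α : ℝ) : ℂ) * (β' : ℂ) + (α : ℂ) * ((β' - β : ℝ) : ℂ))‖
          ≤ ω₁ * Mφ + Mφ * ω₂ := by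
        refine le_trans (norm_add_le _ _) (add_le_add ?_ ?_)
        · rw [norm_mul, Complex.norm_real, Complex.norm_real, Real.norm_eq_abs,
            Real.norm_eq_abs]
          exact mul_le_mul hαd hβ'M (abs_nonneg _) hω₁0
        · rw [norm_mul, Complex.norm_real, Complex.norm_real, Real.norm_eq_abs,
            Real.norm_eq_abs]
          exact mul_le_mul hαM hβd (abs_nonneg _) hMφ0
      calc ‖(((α' - α : ℝ) : ℂ) * (β' : ℂ) + (α : ℂ) * ((β' - β : ℝ) : ℂ))‖ * ‖E‖ * c y
          ≤ (ω₁ * Mφ + Mφ * ω₂) * ‖T‖ * c y := by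
            apply mul_le_mul_of_nonneg_right _ (hc_pos y).le
            exact mul_le_mul h1 (hEntry z₀ w₀) (norm_nonneg _) (by positivity)
        _ = (ω₁ + ω₂) * Mφ * ‖T‖ * c y := by ring
  -- ## continuity in x
  have contx : ∀ y : G, Continuous fun x : G => hatT Δ φ Z T y x := by
    intro y
    rw [continuous_iff_continuousAt]
    intro x₀
    set s : Finset Z := (finite_near x₀ (δ / 4 + 1)).toFinset with hs
    set t : Finset Z := (finite_near (x₀ * y) (δ / 4 + 1)).toFinset with ht
    set F : G → ℂ := fun x => ∑ z ∈ s, ∑ w ∈ t, ((φ ((z : G)⁻¹ * x) : ℝ) : ℂ) *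
      ((φ ((w : G)⁻¹ * (x * y)) : ℝ) : ℂ) * entry T z w * ((c y : ℝ) : ℂ) with hF
    have hFcont : Continuous F := by
      apply continuous_finset_sum
      intro z _
      apply continuous_finset_sum
      intro w _
      apply Continuous.mul
      apply Continuous.mul
      apply Continuous.mul
      · exact Complex.continuous_ofReal.comp (hφcont.comp (continuous_mul_left _))
      · exact Complex.continuous_ofReal.comp (hφcont.comp
          ((continuous_mul_left _).comp (continuous_mul_right y)))
      · exact continuous_const
      · exact continuous_const
    set U : Set G := {x : G | d x₀ x < 1} ∩ (fun x : G => x * y) ⁻¹' {b : G | d (x₀ * y) b < 1}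
      with hU
    have hUmem : U ∈ 𝓝 x₀ := by
      apply Filter.inter_mem
      · exact (ball_open x₀ 1).mem_nhds (by simp [hd.refl])
      · exact ((ball_open (x₀ * y) 1).preimage (continuous_mul_right y)).mem_nhds
          (by simp [hd.refl])
    have heq : ∀ x ∈ U, hatT Δ φ Z T y x = F x := by
      intro x hx
      obtain ⟨hx1, hx2⟩ := hx
      simp only [Set.mem_setOf_eq] at hx1
      have hx2' : d (x₀ * y) (x * y) < 1 := hx2
      unfold hatT
      apply double_sum
      · intro z hz w
        have hzero : φ ((z : G)⁻¹ * x) = 0 := by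
          by_contra hne
          apply hz
          rw [hs, Set.Finite.mem_toFinset]
          have h1 : d (z : G) x ≤ δ / 4 := by rw [← dinv]; exact hsupp' _ hne
          have h2 := hd.triangle (z : G) x x₀
          have h3 := hd.symm x x₀
          show d (z : G) x₀ ≤ δ / 4 + 1
          linarith
        rw [hzero]; push_cast; ring
      · intro w hw z
        have hzero : φ ((w : G)⁻¹ * (x * y)) = 0 := by
          by_contra hne
          apply hw
          rw [ht, Set.Finite.mem_toFinset]
          have h1 : d (w : G) (x * y) ≤ δ / 4 := by rw [← dinv]; exact hsupp' _ hne
          have h2 := hd.triangle (w : G) (x * y) (x₀ * y)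
          have h3 := hd.symm (x * y) (x₀ * y)
          show d (w : G) (x₀ * y) ≤ δ / 4 + 1
          linarith
        rw [hzero]; push_cast; ring
    exact (hFcont.continuousAt).congr
      (Filter.eventuallyEq_of_mem hUmem fun x hx => (heq x hx)).symm
  -- ## continuity of the modular factor
  have hDelta_eq : ∀ y : G, (∫ x, φ (x * y) ^ 2 ∂μ) = (Δ y)⁻¹ := by
    intro y
    have h1 : ∫ u, φ u ^ 2 ∂(Measure.map (fun x => x * y) μ) = ∫ x, φ (x * y) ^ 2 ∂μ :=
      integral_map (measurable_mul_const y).aemeasurable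
        ((hφcont.pow 2).aestronglyMeasurable)
    rw [← h1, hΔ y, integral_smul_measure, hφnorm,
      ENNReal.toReal_ofReal (inv_nonneg.mpr (hΔpos y).le), smul_eq_mul, mul_one]
  have hc_cont : Continuous c := by
    have hfun : c = fun y => (∫ x, φ (x * y) ^ 2 ∂μ) ^ ((1 : ℝ) / 2) := by
      funext y
      rw [hDelta_eq]
      show Δ y ^ (-(1/2) : ℝ) = ((Δ y)⁻¹) ^ ((1 : ℝ) / 2)
      rw [Real.inv_rpow (hΔpos y).le, ← Real.rpow_neg (hΔpos y).le]
    have hD_cont : Continuous fun y : G => ∫ x, φ (x * y) ^ 2 ∂μ := by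
      rw [continuous_iff_continuousAt]
      intro y₀
      obtain ⟨N, hNc, hNmem⟩ := exists_compact_mem_nhds y₀
      have hBc : IsCompact ({g : G | d 1 g ≤ δ / 4} * N⁻¹) := hKcomp.mul hNc.inv
      apply continuousAt_of_dominated
        (bound := ({g : G | d 1 g ≤ δ / 4} * N⁻¹).indicator fun _ => Mφ ^ 2)
      · exact Filter.Eventually.of_forall fun y =>
          ((hφcont.comp (continuous_mul_right y)).pow 2).aestronglyMeasurable
      · filter_upwards [hNmem] with y hy
        apply ae_of_all
        intro x
        by_cases hxB : x ∈ {g : G | d 1 g ≤ δ / 4} * N⁻¹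
        · rw [Set.indicator_of_mem hxB, Real.norm_eq_abs, abs_of_nonneg (by positivity)]
          exact pow_le_pow_left₀ (hφnn _) (hMφ _) 2
        · rw [Set.indicator_of_notMem hxB]
          have hz : φ (x * y) = 0 := by
            by_contra hne
            apply hxB
            have h1 : x * y ∈ {g : G | d 1 g ≤ δ / 4} := hsupp' _ hne
            have h2 : x = (x * y) * y⁻¹ := by group
            rw [h2]
            exact Set.mul_mem_mul h1 (Set.inv_mem_inv.mpr hy)
          rw [hz]
          norm_num
      · rw [integrable_indicator_iff hBc.isClosed.measurableSet]
        exact integrableOn_const hBc.measure_lt_top.ne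
      · exact ae_of_all μ fun x => ((hφcont.comp (continuous_mul_left x)).pow 2).continuousAt
    rw [hfun]
    apply hD_cont.rpow_const
    intro y
    left
    rw [hDelta_eq]
    exact inv_ne_zero (hΔpos y).ne'
  -- ## metric ball neighbourhood of 1
  have hWo_mem : {g : G | d 1 g < δ / 4} ∈ 𝓝 (1 : G) := by
    apply (ball_open 1 (δ / 4)).mem_nhds
    simp only [Set.mem_setOf_eq, hd.refl]
    linarith
  have hd11 : d (1 : G) 1 < δ / 4 := by rw [hd.refl]; linarith
  have half : ∀ (ε B : ℝ), 0 < ε → 0 ≤ B → B * (ε / (2 * (B + 1))) ≤ ε / 2 := by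
    intro ε B hε hB
    have hpos : 0 < 2 * (B + 1) := by linarith
    rw [mul_div_assoc', div_le_div_iff₀ hpos (by norm_num : (0:ℝ) < 2)]
    nlinarith
  -- ## assembling the three statements
  refine ⟨fun y => ⟨⟨Mφ ^ 2 * ‖T‖ * c y, BOUND y⟩, contx y, ?_⟩, ?_, ?_⟩
  · -- right uniform continuity in x, for fixed y
    intro ε hε
    set A : ℝ := Mφ * ‖T‖ * c y with hAdef
    have hA0 : 0 ≤ A := mul_nonneg (mul_nonneg hMφ0 (norm_nonneg _)) (hc_pos y).le
    set ε' : ℝ := ε / (2 * A + 1) with hε'def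
    have hε'pos : 0 < ε' := div_pos hε (by linarith)
    obtain ⟨Vω, hVω_mem, hVω⟩ := rucφ ε' hε'pos
    have hconj : Continuous fun g : G => y⁻¹ * g * y :=
      (continuous_mul_right y).comp (continuous_mul_left y⁻¹)
    have hmem2 : (fun g : G => y⁻¹ * g * y) ⁻¹' ({g : G | d 1 g < δ / 4} ∩ Vω) ∈ 𝓝 (1 : G) := by
      apply hconj.continuousAt.preimage_mem_nhds
      have : y⁻¹ * 1 * y = (1 : G) := by group
      rw [this]
      exact Filter.inter_mem hWo_mem hVω_mem
    refine ⟨({g : G | d 1 g < δ / 4} ∩ Vω) ∩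
      (fun g : G => y⁻¹ * g * y) ⁻¹' ({g : G | d 1 g < δ / 4} ∩ Vω),
      Filter.inter_mem (Filter.inter_mem hWo_mem hVω_mem) hmem2, ?_⟩
    intro g hg x
    obtain ⟨⟨hgWo, hgVω⟩, hg2Wo, hg2Vω⟩ := hg
    have hω₁ : ∀ u : G, |φ (u * g) - φ u| ≤ ε' := fun u => (hVω g hgVω u).le
    have hω₂ : ∀ u : G, |φ (u * (y⁻¹ * g * y)) - φ u| ≤ ε' := fun u => (hVω _ hg2Vω u).le
    have hxy : (x * g) * y = (x * y) * (y⁻¹ * g * y) := by group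
    have hbd := DIFF y y x g (y⁻¹ * g * y) ε' ε' hgWo hg2Wo hω₁ hω₂ hxy
    rw [sub_self, abs_zero, mul_zero, zero_add] at hbd
    have hlt : (ε' + ε') * Mφ * ‖T‖ * c y < ε := by
      have h2A : 0 < 2 * A + 1 := by linarith
      have heq : (ε' + ε') * Mφ * ‖T‖ * c y = ε * (2 * A) / (2 * A + 1) := by
        rw [hε'def, hAdef]; ring
      rw [heq, div_lt_iff₀ h2A]
      nlinarith
    exact lt_of_le_of_lt hbd hlt
  · -- continuity in y, uniformly in x
    intro y₀ ε hε
    set A1 : ℝ := Mφ ^ 2 * ‖T‖ with hA1def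
    have hA10 : 0 ≤ A1 := by positivity
    set A2 : ℝ := Mφ * ‖T‖ * c y₀ with hA2def
    have hA20 : 0 ≤ A2 := mul_nonneg (mul_nonneg hMφ0 (norm_nonneg _)) (hc_pos y₀).le
    set ε₁ : ℝ := ε / (2 * (A1 + 1)) with hε₁def
    set ε₂ : ℝ := ε / (2 * (A2 + 1)) with hε₂def
    have hε₁pos : 0 < ε₁ := div_pos hε (by linarith)
    have hε₂pos : 0 < ε₂ := div_pos hε (by linarith)
    obtain ⟨Vω, hVω_mem, hVω⟩ := rucφ ε₂ hε₂pos
    have hmem1 : {y : G | |c y - c y₀| < ε₁} ∈ 𝓝 y₀ := by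
      have hop : IsOpen {y : G | |c y - c y₀| < ε₁} :=
        isOpen_lt ((hc_cont.sub continuous_const).abs) continuous_const
      apply hop.mem_nhds
      simp [hε₁pos]
    have hmem2 : (fun y : G => y₀⁻¹ * y) ⁻¹' ({g : G | d 1 g < δ / 4} ∩ Vω) ∈ 𝓝 y₀ := by
      apply (continuous_mul_left y₀⁻¹).continuousAt.preimage_mem_nhds
      have : y₀⁻¹ * y₀ = (1 : G) := by group
      rw [this]
      exact Filter.inter_mem hWo_mem hVω_mem
    refine ⟨{y : G | |c y - c y₀| < ε₁} ∩
      (fun y : G => y₀⁻¹ * y) ⁻¹' ({g : G | d 1 g < δ / 4} ∩ Vω),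
      Filter.inter_mem hmem1 hmem2, ?_⟩
    intro y hy x
    obtain ⟨hy1, hy2Wo, hy2Vω⟩ := hy
    have hω₁ : ∀ u : G, |φ (u * 1) - φ u| ≤ 0 := fun u => by simp
    have hω₂ : ∀ u : G, |φ (u * (y₀⁻¹ * y)) - φ u| ≤ ε₂ := fun u => (hVω _ hy2Vω u).le
    have hxy : (x * 1) * y = (x * y₀) * (y₀⁻¹ * y) := by group
    have hbd := DIFF y₀ y x 1 (y₀⁻¹ * y) 0 ε₂ hd11 hy2Wo hω₁ hω₂ hxy
    rw [mul_one] at hbd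
    refine le_trans hbd ?_
    have h1 : A1 * |c y - c y₀| ≤ A1 * ε₁ := mul_le_mul_of_nonneg_left hy1.le hA10
    have h2 : (0 + ε₂) * Mφ * ‖T‖ * c y₀ = A2 * ε₂ := by rw [hA2def]; ring
    have h3 : A1 * ε₁ ≤ ε / 2 := half ε A1 hε hA10
    have h4 : A2 * ε₂ ≤ ε / 2 := half ε A2 hε hA20
    linarith
  · -- compact support in y
    refine ⟨{y : G | d 1 y ≤ P + δ / 2}, hd.proper 1 _, ?_⟩
    intro y hy x
    obtain ⟨z₀, hz₀⟩ := dominant x 1 hd11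
    obtain ⟨w₀, hw₀⟩ := dominant (x * y) 1 hd11
    rw [formula y x z₀ w₀ (fun z hz => (hz₀ z hz).1) (fun w hw => (hw₀ w hw).1)]
    by_cases hα : φ ((z₀ : G)⁻¹ * x) = 0
    · rw [hα]; push_cast; ring
    by_cases hβ : φ ((w₀ : G)⁻¹ * (x * y)) = 0
    · rw [hβ]; push_cast; ring
    by_cases hEz : entry T z₀ w₀ = 0
    · rw [hEz]; ring
    exfalso
    apply hy
    have e1 : d (z₀ : G) x ≤ δ / 4 := by rw [← dinv]; exact hsupp' _ hα
    have e2 : d (w₀ : G) (x * y) ≤ δ / 4 := by rw [← dinv]; exact hsupp' _ hβ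
    have e3 : d (z₀ : G) (w₀ : G) ≤ P := by
      by_contra hc
      exact hEz (hT z₀ w₀ (not_le.mp hc))
    have e4 : d 1 y = d x (x * y) := by
      have := hd.left_invariant x 1 y
      simp only [mul_one] at this
      exact this.symm
    have e5 := hd.triangle x (z₀ : G) (x * y)
    have e6 := hd.triangle (z₀ : G) (w₀ : G) (x * y)
    have e7 := hd.symm (z₀ : G) x
    show d 1 y ≤ P + δ / 2
    linarith
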